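/- Let l be an odd prime, q a prime power with l ∤ q, d the smallest positive integer with l | q^d − 1, s = ν_l(q^d − 1), and n₀ = ⌊n/d⌋. Then GL_n(𝔽_q) has a Sylow l-subgroup isomorphic to the semidirect product (ℤ/l^sℤ)^{n₀} ⋊ P_l(S_{n₀}), where P_l(S_{n₀}) is a Sylow l-subgroup of S_{n₀} acting by permuting coordinates. -/

import Mathlib

/-- The action of `Equiv.Perm ι` on `ι → M` by permuting coordinates,
as a homomorphism into the automorphism group. -/
def permHom (ι M : Type) [Group M] : Equiv.Perm ι →* MulAut (ι → M) where
  toFun σ := MulEquiv.arrowCongr σ (MulEquiv.refl M)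
  map_one' := by ext f i; rfl
  map_mul' σ τ := by ext f i; rfl

open Finset

section Arith
variable {l q d : ℕ}

/-- If `d` is minimal positive with `l ∣ q^d - 1`, then `l ∣ q^j - 1 ↔ d ∣ j` for `j > 0`. -/
lemma dvd_pow_sub_one_iff (hl : l.Prime) (hq1 : 1 < q) (hlq : ¬ l ∣ q)
    (hd : 0 < d) (hdl : l ∣ q ^ d - 1) (hdmin : ∀ e, 0 < e → l ∣ q ^ e - 1 → d ≤ e)
    {j : ℕ} (hj : 0 < j) : l ∣ q ^ j - 1 ↔ d ∣ j := by
  haveI := Fact.mk hl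
  have key : ∀ e : ℕ, l ∣ q ^ e - 1 ↔ (q : ZMod l) ^ e = 1 := by
    intro e
    have h1 : 1 ≤ q ^ e := Nat.one_le_pow _ _ (by omega)
    rw [← Nat.modEq_iff_dvd' h1]
    constructor
    · intro h
      have := (ZMod.natCast_eq_natCast_iff _ _ _).2 h.symm
      simpa using this
    · intro h
      have : ((q ^ e : ℕ) : ZMod l) = ((1 : ℕ) : ZMod l) := by push_cast; simpa using h
      exact ((ZMod.natCast_eq_natCast_iff _ _ _).1 this).symm
  have hfin : IsOfFinOrder (q : ZMod l) := by
    refine isOfFinOrder_iff_pow_eq_one.2 ⟨d, hd, ?_⟩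
    exact (key d).1 hdl
  have hordpos : 0 < orderOf (q : ZMod l) := hfin.orderOf_pos
  have horddvd : l ∣ q ^ orderOf (q : ZMod l) - 1 := (key _).2 (pow_orderOf_eq_one _)
  have hord : orderOf (q : ZMod l) = d := by
    have h1 : d ≤ orderOf (q : ZMod l) := hdmin _ hordpos horddvd
    have h2 : orderOf (q : ZMod l) ∣ d := orderOf_dvd_of_pow_eq_one ((key d).1 hdl)
    exact Nat.le_antisymm (Nat.le_of_dvd hd h2) h1
  rw [key, ← hord, orderOf_dvd_iff_pow_eq_one]

/-- LTE for the exponents. -/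
lemma padic_q_pow_sub_one (hl : l.Prime) (hlodd : l ≠ 2) (hq1 : 1 < q) (hlq : ¬ l ∣ q)
    (hd : 0 < d) (hdl : l ∣ q ^ d - 1) {m : ℕ} (hm : m ≠ 0) :
    padicValNat l (q ^ (d * m) - 1) =
      padicValNat l (q ^ d - 1) + padicValNat l m := by
  haveI := Fact.mk hl
  have h1 : 1 < q ^ d := Nat.one_lt_pow (by omega) hq1
  have := padicValNat.pow_sub_pow (p := l) (x := q ^ d) (y := 1)
    (hl.odd_of_ne_two hlodd) h1 (by simpa using hdl) (by simpa using fun h => hlq (hl.dvd_of_dvd_pow h)) hm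
  simpa [← pow_mul, one_pow] using this

end Arith

section Count
variable {l q n d : ℕ}

lemma factorization_prod_card (hl : l.Prime) (hlodd : l ≠ 2) (hq1 : 1 < q)
    (hlq : ¬ l ∣ q) (hd : 0 < d) (hdl : l ∣ q ^ d - 1)
    (hdmin : ∀ e, 0 < e → l ∣ q ^ e - 1 → d ≤ e) :
    (∏ i ∈ range n, (q ^ n - q ^ i)).factorization l
      = (n / d) * padicValNat l (q ^ d - 1) + (Nat.factorization (Nat.factorial (n / d))) l := by
  have hpow : ∀ {a b : ℕ}, a < b → q ^ b - q ^ a ≠ 0 := fun {a b} h =>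
    Nat.sub_ne_zero_of_lt (Nat.pow_lt_pow_right hq1 h)
  have hterm : ∀ i ∈ range n, (q ^ n - q ^ i) ≠ 0 := fun i hi => hpow (mem_range.1 hi)
  -- f j = ν_l (q^j - 1)
  set f : ℕ → ℕ := fun j => (q ^ j - 1).factorization l with hf
  have hfzero : ∀ j, ¬ d ∣ j → f j = 0 := by
    intro j hdj
    rcases Nat.eq_zero_or_pos j with rfl | hj
    · exact absurd (dvd_zero d) hdj
    · exact Nat.factorization_eq_zero_of_not_dvd
        (fun h => hdj ((dvd_pow_sub_one_iff hl hq1 hlq hd hdl hdmin hj).1 h))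
  have hfval : ∀ m : ℕ, f (d * (m + 1)) =
      padicValNat l (q ^ d - 1) + padicValNat l (m + 1) := by
    intro m
    rw [hf]
    simp only
    rw [Nat.factorization_def _ hl]
    exact padic_q_pow_sub_one hl hlodd hq1 hlq hd hdl (Nat.succ_ne_zero m)
  have step1 : (∏ i ∈ range n, (q ^ n - q ^ i)).factorization l
      = ∑ i ∈ range n, f (n - i) := by
    rw [Nat.factorization_prod hterm]
    rw [Finsupp.finset_sum_apply]
    refine Finset.sum_congr rfl fun i hi => ?_
    have hi' := mem_range.1 hi
    have hsplit : q ^ n - q ^ i = q ^ i * (q ^ (n - i) - 1) := by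
      rw [Nat.mul_sub, mul_one, ← pow_add, Nat.add_sub_cancel' (le_of_lt hi')]
    have h2 : 1 < q ^ (n - i) := Nat.one_lt_pow (by omega) hq1
    have hq0 : q ^ i ≠ 0 := pow_ne_zero _ (by omega)
    rw [hsplit, Nat.factorization_mul hq0 (by omega), Finsupp.add_apply,
      Nat.factorization_eq_zero_of_not_dvd (fun h => hlq (hl.dvd_of_dvd_pow h)), zero_add]
  have step2 : ∑ i ∈ range n, f (n - i) = ∑ j ∈ range n, f (j + 1) := by
    rw [← Finset.sum_range_reflect (fun j => f (j + 1)) n]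
    refine Finset.sum_congr rfl fun i hi => ?_
    have := mem_range.1 hi
    congr 1
    omega
  have step3 : ∑ j ∈ range n, f (j + 1) = ∑ m ∈ range (n / d), f (d * (m + 1)) := by
    rw [← Finset.sum_filter_of_ne (p := fun j => d ∣ (j + 1)) (s := range n)
      (f := fun j => f (j + 1)) (fun x _ hx => by
        by_contra hdx
        exact hx (hfzero _ hdx))]
    refine (Finset.sum_nbij' (i := fun m => d * (m + 1) - 1) (j := fun j => (j + 1) / d - 1)
      ?_ ?_ ?_ ?_ ?_).symm
    · intro m hm
      have hm' := mem_range.1 hm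
      have h1 : d * (m + 1) ≤ n :=
        le_trans (Nat.mul_le_mul_left d (by omega)) (Nat.mul_div_le n d)
      have h0 : 1 ≤ d * (m + 1) := Nat.one_le_iff_ne_zero.2 (by positivity)
      simp only [mem_filter, mem_range]
      refine ⟨by omega, ?_⟩
      have he : d * (m + 1) - 1 + 1 = d * (m + 1) := by omega
      rw [he]
      exact Dvd.intro _ rfl
    · intro j hj
      simp only [mem_filter, mem_range] at hj
      obtain ⟨hjn, k, hk⟩ := hj
      have hk1 : 1 ≤ k := by nlinarith
      have h2 : (j + 1) / d = k := by rw [hk]; exact Nat.mul_div_cancel_left k hd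
      simp only [mem_range, h2]
      have hle : k ≤ n / d := Nat.le_div_iff_mul_le hd |>.2 (by rw [Nat.mul_comm]; omega)
      omega
    · intro m hm
      have h0 : 1 ≤ d * (m + 1) := Nat.one_le_iff_ne_zero.2 (by positivity)
      have he : d * (m + 1) - 1 + 1 = d * (m + 1) := by omega
      rw [he, Nat.mul_div_cancel_left _ hd]
      omega
    · intro j hj
      simp only [mem_filter, mem_range] at hj
      obtain ⟨hjn, k, hk⟩ := hj
      have hk1 : 1 ≤ k := by nlinarith
      have h2 : (j + 1) / d = k := by rw [hk]; exact Nat.mul_div_cancel_left k hd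
      simp only [h2]
      have he : k - 1 + 1 = k := by omega
      rw [he]
      omega
    · intro m hm
      congr 1
      have h0 : 1 ≤ d * (m + 1) := Nat.one_le_iff_ne_zero.2 (by positivity)
      omega
  have step4 : ∑ m ∈ range (n / d), f (d * (m + 1))
      = (n / d) * padicValNat l (q ^ d - 1) + (Nat.factorization (Nat.factorial (n / d))) l := by
    have : ∀ m ∈ range (n / d), f (d * (m + 1))
        = padicValNat l (q ^ d - 1) + padicValNat l (m + 1) := fun m _ => hfval m
    rw [Finset.sum_congr rfl this, Finset.sum_add_distrib, Finset.sum_const, card_range,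
      smul_eq_mul]
    congr 1
    have hfact : (Nat.factorial (n / d)) = ∏ m ∈ range (n / d), (m + 1) :=
      (Finset.prod_range_add_one_eq_factorial _).symm
    rw [hfact, Nat.factorization_prod (fun x _ => Nat.succ_ne_zero x),
      Finsupp.finset_sum_apply]
    exact Finset.sum_congr rfl fun m _ => (Nat.factorization_def _ hl).symm
  omega

end Count


open Polynomial

/-- Any finite field `F` of cardinality `p^r` has an extension of cardinality `p^(r*d)`. -/
lemma exists_bigfield (p r : ℕ) (hp : p.Prime) (hr : r ≠ 0)
    (F : Type) [Field F] [Fintype F] (hF : Fintype.card F = p ^ r) (d : ℕ) (hd : d ≠ 0) :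
    ∃ (K : Type) (_ : Field K) (_ : Algebra F K) (_ : Fintype K),
      Fintype.card K = (p ^ r) ^ d := by
  haveI hpf := Fact.mk hp
  -- the characteristic of `F` is `p`
  have hchar : CharP F p := by
    have hcp : (ringChar F).Prime := CharP.char_is_prime F _
    obtain ⟨m, hm⟩ := FiniteField.card F (ringChar F)
    have : p = ringChar F := by
      have hdvd : p ∣ ringChar F ^ (m : ℕ) := by
        rw [← hm.2, hF]; exact dvd_pow_self p hr
      exact (Nat.prime_dvd_prime_iff_eq hp hcp).1 (hp.dvd_of_dvd_pow hdvd)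
    exact this ▸ ringChar.charP F
  set e : ℕ := r * d with he
  have he0 : e ≠ 0 := mul_ne_zero hr hd
  set gp : F[X] := X ^ p ^ e - X with hgp
  let K := gp.SplittingField
  haveI : CharP K p := (Algebra.charP_iff F K p).mp hchar
  haveI : Finite K := Module.finite_of_finite F
  haveI : Fintype K := Fintype.ofFinite K
  refine ⟨K, inferInstance, inferInstance, inferInstance, ?_⟩
  have hp1 : 1 < p := hp.one_lt
  have aux : gp ≠ 0 := FiniteField.X_pow_card_pow_sub_X_ne_zero _ he0 hp1
  have key : Fintype.card (gp.rootSet K) = gp.natDegree :=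
    card_rootSet_eq_natDegree (galois_poly_separable p _ (dvd_pow_self p he0))
      (SplittingField.splits gp)
  have nat_degree_eq : gp.natDegree = p ^ e :=
    FiniteField.X_pow_card_pow_sub_X_natDegree_eq _ he0 hp1
  have huniv : gp.rootSet K = Set.univ := by
    rw [Set.eq_univ_iff_forall]
    suffices ∀ x (_ : x ∈ (⊤ : Subalgebra F K)), x ∈ gp.rootSet K by simpa
    rw [← SplittingField.adjoin_rootSet]
    simp_rw [Algebra.mem_adjoin_iff]
    intro x hx
    refine Subring.closure_induction ?_ ?_ ?_ ?_ ?_ ?_ hx <;> simp_rw [mem_rootSet_of_ne aux]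
    · rintro x (⟨a, rfl⟩ | hx)
      · simp only [hgp, map_sub, map_pow, aeval_X]
        rw [← map_pow]
        have : a ^ p ^ e = a := by
          rw [he, pow_mul, ← hF]
          exact FiniteField.pow_card_pow d a
        rw [this, sub_self]
      · rwa [mem_rootSet_of_ne aux] at hx
    · simp only [hgp, map_sub, aeval_X_pow, aeval_X]
      rw [zero_pow (pow_ne_zero _ hp.ne_zero), sub_zero]
    · simp [hgp]
    · simp only [hgp, aeval_X_pow, aeval_X, map_sub, add_pow_char_pow, sub_eq_zero]
      intro x y _ _ hx hy
      rw [hx, hy]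
    · intro x _ hx
      simp only [hgp, sub_eq_zero, aeval_X_pow, aeval_X, map_sub, sub_neg_eq_add] at *
      rw [neg_pow, hx, neg_one_pow_char_pow]
      ring
    · simp only [hgp, aeval_X_pow, aeval_X, map_sub, mul_pow, sub_eq_zero]
      intro x y _ _ hx hy
      rw [hx, hy]
  have : Fintype.card K = p ^ e := by
    rw [← nat_degree_eq, ← key]
    exact (Fintype.card_congr ((Equiv.setCongr huniv).trans (Equiv.Set.univ K))).symm
  rw [this, he, pow_mul]


open Module

open Module

/-- Embedding of the wreath-like semidirect product into `GL n F`. -/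
lemma exists_embedding (F K : Type) [Field F] [Fintype F] [Field K] [Algebra F K]
    [FiniteDimensional F K] (n n₀ m : ℕ) (hm : 0 < m) (x : Kˣ) (hx : orderOf x = m)
    (hrank : n₀ * finrank F K ≤ n) (H : Subgroup (Equiv.Perm (Fin n₀))) :
    ∃ ψ : ((Fin n₀ → Multiplicative (ZMod m))
        ⋊[(permHom (Fin n₀) (Multiplicative (ZMod m))).comp H.subtype] H) →* GL (Fin n) F,
      Function.Injective ψ := by
  classical
  haveI : NeZero m := ⟨hm.ne'⟩
  -- the homomorphism `ZMod m → Kˣ`, `1 ↦ x`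
  have hxm : ((m : ℤ) • Additive.ofMul x : Additive Kˣ) = 0 := by
    have : x ^ m = 1 := by rw [← hx]; exact pow_orderOf_eq_one x
    simpa [← ofMul_pow] using congrArg Additive.ofMul this
  let ψ₀ : Multiplicative (ZMod m) →* Kˣ :=
    AddMonoidHom.toMultiplicativeLeft
      (ZMod.lift m ⟨zmultiplesHom (Additive Kˣ) (Additive.ofMul x), hxm⟩)
  have hψ₀ : ∀ a : Multiplicative (ZMod m), ψ₀ a = x ^ (a.toAdd).val := by
    intro a
    have hv : (((a.toAdd.val : ℤ)) : ZMod m) = a.toAdd := by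
      push_cast
      exact ZMod.natCast_rightInverse a.toAdd
    show ((ZMod.lift m ⟨zmultiplesHom (Additive Kˣ) (Additive.ofMul x), hxm⟩) a.toAdd).toMul = _
    conv_lhs => rw [← hv, ZMod.lift_coe]
    show (((a.toAdd.val : ℤ) • Additive.ofMul x : Additive Kˣ)).toMul = _
    rw [toMul_zsmul, toMul_ofMul, zpow_natCast]
  have hψ₀inj : ∀ a : Multiplicative (ZMod m), ψ₀ a = 1 → a = 1 := by
    intro a ha
    rw [hψ₀ a] at ha
    have hdvd : orderOf x ∣ a.toAdd.val := orderOf_dvd_of_pow_eq_one ha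
    rw [hx] at hdvd
    have hlt : a.toAdd.val < m := ZMod.val_lt a.toAdd
    have hval : a.toAdd.val = 0 := Nat.eq_zero_of_dvd_of_lt hdvd hlt
    have h0 : a.toAdd = 0 := by
      have h := ZMod.natCast_rightInverse (n := m) a.toAdd
      rw [hval, Nat.cast_zero] at h
      exact h.symm
    exact h0
  -- multiplication action of `Kˣ` on `K` as `F`-linear automorphisms
  let μ : Kˣ →* (K ≃ₗ[F] K) :=
    (LinearMap.GeneralLinearGroup.generalLinearEquiv F K).toMonoidHom.comp
      (Units.map (Algebra.lmul F K).toRingHom.toMonoidHom)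
  have hμ : ∀ (u : Kˣ) (k : K), μ u k = (u : K) * k := fun _ _ => rfl
  -- the big vector space
  let V := (Fin n₀ → K) × (Fin (n - n₀ * finrank F K) → F)
  -- the coordinatewise multiplication action
  let πN : (Fin n₀ → Multiplicative (ZMod m)) →* ((Fin n₀ → K) ≃ₗ[F] (Fin n₀ → K)) := {
    toFun := fun a => LinearEquiv.piCongrRight (fun i => μ (ψ₀ (a i)))
    map_one' := by
      refine LinearEquiv.ext fun v => funext fun i => ?_
      show (μ (ψ₀ 1)) (v i) = v i
      rw [map_one, map_one]
      rfl
    map_mul' := by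
      intro a b
      refine LinearEquiv.ext fun v => funext fun i => ?_
      show (μ (ψ₀ (a i * b i))) (v i) = (μ (ψ₀ (a i))) ((μ (ψ₀ (b i))) (v i))
      rw [map_mul, map_mul]
      rfl }
  -- the permutation action
  let πH : Equiv.Perm (Fin n₀) →* ((Fin n₀ → K) ≃ₗ[F] (Fin n₀ → K)) := {
    toFun := fun σ => LinearEquiv.piCongrLeft' F (fun _ => K) σ
    map_one' := rfl
    map_mul' := fun σ τ => LinearEquiv.ext fun v => funext fun i => rfl }
  -- extension to `V`
  let P : ((Fin n₀ → K) ≃ₗ[F] (Fin n₀ → K)) →* (V ≃ₗ[F] V) := {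
    toFun := fun e => e.prodCongr (LinearEquiv.refl F _)
    map_one' := LinearEquiv.ext fun v => rfl
    map_mul' := fun e e' => LinearEquiv.ext fun v => rfl }
  let f₁ := P.comp πN
  let f₂ := P.comp (πH.comp H.subtype)
  have hcompat : ∀ σ : H,
      f₁.comp (((permHom (Fin n₀) (Multiplicative (ZMod m))).comp H.subtype σ)).toMonoidHom
        = (MulAut.conj (f₂ σ)).toMonoidHom.comp f₁ := by
    intro σ
    ext a : 1
    show f₁ (fun i => a ((σ : Equiv.Perm (Fin n₀)).symm i)) = MulAut.conj (f₂ σ) (f₁ a)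
    rw [MulAut.conj_apply, eq_mul_inv_iff_mul_eq]
    exact LinearEquiv.ext fun v => rfl
  let Φ := SemidirectProduct.lift f₁ f₂ hcompat
  -- `Φ` is injective
  have hΦinj : Function.Injective Φ := by
    refine (injective_iff_map_eq_one Φ).2 ?_
    rintro ⟨a, σ⟩ h
    have heval : ∀ w : V, (f₁ a) ((f₂ σ) w) = w := by
      intro w
      have : Φ ⟨a, σ⟩ w = w := by rw [h]; rfl
      exact this
    have heval1 : ∀ (v : Fin n₀ → K) (i : Fin n₀),
        (ψ₀ (a i) : K) * v ((σ : Equiv.Perm (Fin n₀)).symm i) = v i := by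
      intro v i
      have := congrArg Prod.fst (heval (v, 0))
      exact congrFun this i
    have hσ : ∀ j : Fin n₀, (σ : Equiv.Perm (Fin n₀)) j = j := by
      intro j
      by_contra hne
      have := heval1 (Pi.single j 1) ((σ : Equiv.Perm (Fin n₀)) j)
      rw [Equiv.symm_apply_apply, Pi.single_eq_same, mul_one,
        Pi.single_eq_of_ne hne] at this
      exact Units.ne_zero _ this
    have hσ1 : σ = 1 := Subtype.ext (Equiv.ext hσ)
    have ha : a = 1 := by
      funext i
      have := heval1 (fun _ => 1) i
      rw [mul_one] at this
      exact hψ₀inj _ (Units.ext this)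
    rw [ha, hσ1]
    rfl
  -- dimension count
  haveI : FiniteDimensional F V := by infer_instance
  have hdim : finrank F V = n := by
    have h1 : finrank F (Fin n₀ → K) = n₀ * finrank F K := by
      rw [finrank_pi_fintype]
      simp [Finset.sum_const, Fintype.card_fin]
    have h2 : finrank F (Fin (n - n₀ * finrank F K) → F) = n - n₀ * finrank F K := by
      rw [finrank_pi]
      simp
    rw [finrank_prod, h1, h2]
    omega
  let e : V ≃ₗ[F] (Fin n → F) := LinearEquiv.ofFinrankEq _ _ (by rw [hdim, finrank_pi]; simp)
  -- conjugation by `e`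
  let c : (V ≃ₗ[F] V) ≃* ((Fin n → F) ≃ₗ[F] (Fin n → F)) := {
    toFun := fun g => (e.symm.trans g).trans e
    invFun := fun g => (e.trans g).trans e.symm
    left_inv := fun g => LinearEquiv.ext fun v => by simp
    right_inv := fun g => LinearEquiv.ext fun v => by simp
    map_mul' := fun g h => LinearEquiv.ext fun v => by
      show e ((g * h) (e.symm v)) = e (g (e.symm (e (h (e.symm v)))))
      rw [e.symm_apply_apply]
      rfl }
  let gl : ((Fin n → F) ≃ₗ[F] (Fin n → F)) ≃* GL (Fin n) F :=
    (Matrix.GeneralLinearGroup.toLin.trans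
      (LinearMap.GeneralLinearGroup.generalLinearEquiv F (Fin n → F))).symm
  refine ⟨gl.toMonoidHom.comp (c.toMonoidHom.comp Φ), ?_⟩
  exact gl.injective.comp (c.injective.comp hΦinj)



/-- For an odd prime `l` with `l ∤ q`, `d` minimal positive with `l ∣ q^d − 1`,
`s = ν_l(q^d − 1)` and `n₀ = ⌊n/d⌋`, the group `GL_n(𝔽_q)` has a Sylow `l`-subgroup
isomorphic to `(ℤ/l^sℤ)^{n₀} ⋊ P_l(S_{n₀})`, a Sylow `l`-subgroup of `S_{n₀}` acting by
permuting coordinates. -/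
theorem sylow_GL (l p r q n d : ℕ) (hl : l.Prime) (hlodd : l ≠ 2)
    (hp : p.Prime) (hr : 0 < r) (hq : q = p ^ r) (hlq : ¬ l ∣ q)
    (F : Type) [Field F] [Fintype F] (hF : Fintype.card F = q)
    (hd : 0 < d) (hdl : l ∣ q ^ d - 1)
    (hdmin : ∀ e, 0 < e → l ∣ q ^ e - 1 → d ≤ e)
    (P' : Sylow l (Equiv.Perm (Fin (n / d)))) :
    ∃ Q : Sylow l (GL (Fin n) F),
      Nonempty (((Fin (n / d) → Multiplicative (ZMod (l ^ padicValNat l (q ^ d - 1))))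
          ⋊[(permHom (Fin (n / d)) (Multiplicative (ZMod (l ^ padicValNat l (q ^ d - 1))))).comp
              (P' : Subgroup (Equiv.Perm (Fin (n / d)))).subtype] P')
        ≃* (Q : Subgroup (GL (Fin n) F))) := by
  classical
  haveI := Fact.mk hl
  have hq1 : 1 < q := by
    rw [hq]
    exact Nat.one_lt_pow hr.ne' hp.one_lt
  -- the big field `K`
  obtain ⟨K, _, _, _, hK⟩ := exists_bigfield p r hp hr.ne' F (hq ▸ hF) d hd.ne'
  have hKq : Fintype.card K = q ^ d := by rw [hK, hq]
  haveI : FiniteDimensional F K := Module.Finite.of_finite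
  have hqd1 : 1 < q ^ d := Nat.one_lt_pow hd.ne' hq1
  have hfinrank : Module.finrank F K = d := by
    have h := card_eq_pow_finrank (K := F) (V := K)
    rw [hKq, hF] at h
    exact (Nat.pow_right_injective hq1 h.symm)
  -- an element of order `l ^ padicValNat l (q ^ d - 1)` in `Kˣ`
  have hcardu : Nat.card Kˣ = q ^ d - 1 := by
    rw [Nat.card_eq_fintype_card, Fintype.card_units, hKq]
  obtain ⟨g, hg⟩ := IsCyclic.exists_ofOrder_eq_natCard (α := Kˣ)
  rw [hcardu] at hg
  have hls : l ^ padicValNat l (q ^ d - 1) ∣ q ^ d - 1 := pow_padicValNat_dvd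
  have hlspos : 0 < l ^ padicValNat l (q ^ d - 1) := Nat.pow_pos hl.pos
  have hx : orderOf (g ^ ((q ^ d - 1) / l ^ padicValNat l (q ^ d - 1)))
      = l ^ padicValNat l (q ^ d - 1) := by
    have h := orderOf_pow_orderOf_div (x := g) (n := l ^ padicValNat l (q ^ d - 1))
      (by rw [hg]; omega) (by rw [hg]; exact hls)
    rwa [hg] at h
  -- the embedding
  have hrank : (n / d) * Module.finrank F K ≤ n := by
    rw [hfinrank]
    exact Nat.div_mul_le_self n d
  obtain ⟨ψ, hψ⟩ := exists_embedding F K n (n / d) (l ^ padicValNat l (q ^ d - 1)) hlspos _ hx hrank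
    (P' : Subgroup (Equiv.Perm (Fin (n / d))))
  -- cardinality of the image
  have hcard : Nat.card ψ.range = l ^ ((Nat.card (GL (Fin n) F)).factorization l) := by
    -- the left-hand side
    have h1 : Nat.card ψ.range
        = Nat.card ((Fin (n / d) → Multiplicative (ZMod (l ^ padicValNat l (q ^ d - 1))))
            ⋊[(permHom (Fin (n / d)) (Multiplicative (ZMod (l ^ padicValNat l (q ^ d - 1))))).comp
                (P' : Subgroup (Equiv.Perm (Fin (n / d)))).subtype] P') :=
      (Nat.card_congr (MonoidHom.ofInjective hψ).toEquiv).symm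
    have h2 : Nat.card ((Fin (n / d) → Multiplicative (ZMod (l ^ padicValNat l (q ^ d - 1))))
            ⋊[(permHom (Fin (n / d)) (Multiplicative (ZMod (l ^ padicValNat l (q ^ d - 1))))).comp
                (P' : Subgroup (Equiv.Perm (Fin (n / d)))).subtype] P')
        = Nat.card (Fin (n / d) → Multiplicative (ZMod (l ^ padicValNat l (q ^ d - 1)))) * Nat.card P' := by
      rw [← Nat.card_prod]
      exact Nat.card_congr
        ⟨fun x => (x.left, x.right), fun p => ⟨p.1, p.2⟩, fun x => rfl, fun p => rfl⟩
    have h3 : Nat.card (Fin (n / d) → Multiplicative (ZMod (l ^ padicValNat l (q ^ d - 1)))) = l ^ ((n / d) * padicValNat l (q ^ d - 1)) := by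
      rw [Nat.card_fun, Nat.card_congr (Multiplicative.toAdd (α := ZMod (l ^ padicValNat l (q ^ d - 1)))),
        Nat.card_zmod, Nat.card_eq_fintype_card, Fintype.card_fin, ← pow_mul, mul_comm (padicValNat l (q ^ d - 1)) (n / d)]
    have h4 : Nat.card P' = l ^ ((Nat.factorial (n / d)).factorization l) := by
      rw [Sylow.card_eq_multiplicity, Nat.card_eq_fintype_card, Fintype.card_perm,
        Fintype.card_fin]
    rw [h1, h2, h3, h4, ← pow_add]
    -- the right-hand side
    have h5 : Nat.card (GL (Fin n) F) = ∏ i ∈ Finset.range n, (q ^ n - q ^ i) := by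
      rw [Matrix.card_GL_field, hF]
      exact Fin.prod_univ_eq_prod_range (fun i => q ^ n - q ^ i) n
    rw [h5, factorization_prod_card hl hlodd hq1 hlq hd hdl hdmin]
  let Q : Sylow l (GL (Fin n) F) := Sylow.ofCard ψ.range hcard
  have hQ : (Q : Subgroup (GL (Fin n) F)) = ψ.range := rfl
  exact ⟨Q, ⟨(MonoidHom.ofInjective hψ).trans (MulEquiv.subgroupCongr hQ.symm)⟩⟩
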